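/- arXiv:2408.08277 — 2 statements merged into one kernel-verified Lean document; each statement's English description precedes it below -/
import Mathlib

section
/- Let T > 0. Let g, h, λ : [0,T] → ℝ be nonnegative, bounded, Borel measurable functions with h(t) > 0 for every t ∈ [0,T], let V : ℝ → ℝ be a continuous nondecreasing function with associated Lebesgue–Stieltjes measure μ_V, and let Φ : ℝ → ℝ be continuous, nondecreasing on [0,∞) with Φ(r) > 0 for all r > 0. Fix z₀ > 0 and define J(z) := ∫_{z₀}^{z} 1/Φ(r) dr for z > 0. If for every t ∈ [0,T] one has g(t) ≤ h(t) + ∫_{(t,T]} λ(s)·Φ(g(s)) dμ_V(s), then for every t ∈ [0,T] with g(t) > 0 one has J(g(t)) ≤ J(h*(t)) + ∫_{(t,T]} λ(s) dμ_V(s), where h*(t) := sup_{t ≤ s ≤ T} h(s). -/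
open MeasureTheory Set

open Filter Topology ENNReal

lemma bihari_key (ν : Measure ℝ) [IsFiniteMeasure ν] (t T H c y : ℝ)
    (hHpos : 0 < H)
    (G : ℝ → ℝ) (hG : ∀ a b : ℝ, H ≤ a → a ≤ b → G b ≤ G a)
    (hGc : ContinuousWithinAt G (Iio c) c)
    (w : ℝ → ℝ) (hw : ∀ s, w s = H + (ν (Ioc s T)).toReal)
    (hcH : H < c) (hcw : c ≤ w t)
    (hlt : ∀ r : ℝ, H < r → r < c → y < G r) :
    ENNReal.ofReal (c - H) ≤ ν {s | y ≤ G (w s)} := by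
  have hδpos : 0 < c - H := by linarith
  -- (♦) : y ≤ G z for H ≤ z ≤ c
  have hdiamond : ∀ z : ℝ, H ≤ z → z ≤ c → y ≤ G z := by
    intro z hz1 hz2
    rcases lt_or_eq_of_le hz2 with hz2 | hz2
    · -- pick r with max z H < r < c? simpler: r := max z ((H+c)/2)
      set r := max z ((H + c) / 2) with hr
      have hrc : r < c := by
        apply max_lt hz2; linarith
      have hrH : H < r := lt_of_lt_of_le (by linarith : H < (H + c) / 2) (le_max_right _ _)
      have : y < G r := hlt r hrH hrc
      have : G r ≤ G z := hG z r hz1 (le_max_left _ _)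
      linarith [hlt r hrH hrc]
    · subst hz2
      have htend : Tendsto G (𝓝[<] z) (𝓝 (G z)) := hGc
      refine ge_of_tendsto htend ?_
      filter_upwards [Ioo_mem_nhdsLT hcH] with r hr
      exact (hlt r hr.1 hr.2).le
  -- antitone w
  have hw_anti : Antitone w := by
    intro a b hab
    rw [hw a, hw b]
    have h2 : ν (Ioc b T) ≤ ν (Ioc a T) := measure_mono (Ioc_subset_Ioc_left hab)
    have h3 := (ENNReal.toReal_le_toReal (measure_ne_top _ _) (measure_ne_top ν (Ioc a T))).2 h2
    linarith
  have hwH : ∀ s, H ≤ w s := fun s => by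
    rw [hw s]; exact le_add_of_nonneg_right ENNReal.toReal_nonneg
  have htT : t < T := by
    by_contra hcon
    have : Ioc t T = ∅ := Ioc_eq_empty hcon
    rw [hw t, this] at hcw; simp at hcw; linarith
  -- the set B and a
  set B : Set ℝ := {s | t < s ∧ s ≤ T ∧ w s < c} with hB
  have hTB : T ∈ B := by
    refine ⟨htT, le_refl _, ?_⟩
    rw [hw T]; simp [Ioc_eq_empty (lt_irrefl T)]; linarith
  have hBne : B.Nonempty := ⟨T, hTB⟩
  have hBbdd : BddBelow B := ⟨t, fun s hs => hs.1.le⟩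
  set a := sInf B with ha
  have hta : t ≤ a := le_csInf hBne fun s hs => hs.1.le
  have haT : a ≤ T := csInf_le hBbdd hTB
  have h_after : ∀ s, a < s → s ≤ T → w s < c := by
    intro s hs hsT
    obtain ⟨b, hbB, hbs⟩ := exists_lt_of_csInf_lt hBne hs
    exact lt_of_le_of_lt (hw_anti hbs.le) hbB.2.2
  have h_before : ∀ s, t < s → s < a → c ≤ w s := by
    intro s hts hsa
    have : s ∉ B := notMem_of_lt_csInf hsa hBbdd
    simp only [hB, mem_setOf_eq] at this
    push_neg at this
    exact this hts (hsa.le.trans haT)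
  -- w a ≤ c via continuity from below
  have h_wa : w a ≤ c := by
    have hseq : Tendsto (fun n : ℕ => ν (Ioc (a + 1 / (n + 1)) T)) atTop (𝓝 (ν (Ioc a T))) := by
      have hmono : Monotone (fun n : ℕ => Ioc (a + 1 / ((n : ℝ) + 1)) T) := by
        intro m n hmn
        apply Ioc_subset_Ioc_left
        have : (1 : ℝ) / (n + 1) ≤ 1 / (m + 1) := by
          apply one_div_le_one_div_of_le (by positivity); exact_mod_cast Nat.succ_le_succ hmn
        linarith
      have hunion : (⋃ n : ℕ, Ioc (a + 1 / ((n : ℝ) + 1)) T) = Ioc a T := by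
        ext x
        simp only [mem_iUnion, mem_Ioc]
        constructor
        · rintro ⟨n, h1, h2⟩
          have : (0:ℝ) < 1 / ((n:ℝ) + 1) := by positivity
          exact ⟨by linarith, h2⟩
        · rintro ⟨h1, h2⟩
          obtain ⟨n, hn⟩ := exists_nat_one_div_lt (by linarith : (0:ℝ) < x - a)
          exact ⟨n, by linarith, h2⟩
      have := tendsto_measure_iUnion_atTop (μ := ν) hmono
      rwa [hunion] at this
    have hbound : ∀ᶠ n : ℕ in atTop, ν (Ioc (a + 1 / ((n : ℝ) + 1)) T) ≤ ENNReal.ofReal (c - H) := by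
      filter_upwards with n
      rcases le_or_gt (a + 1 / ((n : ℝ) + 1)) T with hle | hgt
      · have h1 : a < a + 1 / ((n : ℝ) + 1) := by
          have : (0:ℝ) < 1 / ((n : ℝ) + 1) := by positivity
          linarith
        have := h_after _ h1 hle
        rw [hw _] at this
        have h2 : (ν (Ioc (a + 1 / ((n : ℝ) + 1)) T)).toReal < c - H := by linarith
        exact le_of_lt ((ENNReal.lt_ofReal_iff_toReal_lt (measure_ne_top _ _)).2 h2)
      · rw [Ioc_eq_empty (not_lt.2 hgt.le)]
        simp
    have := le_of_tendsto hseq hbound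
    rw [hw a]
    have h3 : (ν (Ioc a T)).toReal ≤ c - H :=
      ENNReal.toReal_le_of_le_ofReal hδpos.le this
    linarith
  -- Icc a T ⊆ target
  have hsub : Icc a T ⊆ {s | y ≤ G (w s)} := by
    intro s hs
    have h1 : w s ≤ c := le_trans (hw_anti hs.1) h_wa
    exact hdiamond (w s) (hwH s) h1
  refine le_trans ?_ (measure_mono hsub)
  -- ν (Icc a T) ≥ ofReal (c - H)
  rcases eq_or_lt_of_le hta with hta' | hta'
  · -- a = t
    have h1 : ENNReal.ofReal (c - H) ≤ ν (Ioc t T) := by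
      apply ENNReal.ofReal_le_of_le_toReal
      rw [hw t] at hcw; linarith
    exact le_trans h1 (measure_mono (by rw [← hta']; exact Ioc_subset_Icc_self))
  · -- t < a
    have hseq : Tendsto (fun n : ℕ => ν (Ioc (a - 1 / ((n:ℝ) + 1)) T)) atTop (𝓝 (ν (Icc a T))) := by
      have hanti : Antitone (fun n : ℕ => Ioc (a - 1 / ((n : ℝ) + 1)) T) := by
        intro m n hmn
        apply Ioc_subset_Ioc_left
        have : (1 : ℝ) / (n + 1) ≤ 1 / (m + 1) := by
          apply one_div_le_one_div_of_le (by positivity); exact_mod_cast Nat.succ_le_succ hmn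
        linarith
      have hinter : (⋂ n : ℕ, Ioc (a - 1 / ((n : ℝ) + 1)) T) = Icc a T := by
        ext x
        simp only [mem_iInter, mem_Ioc, mem_Icc]
        constructor
        · rintro h
          refine ⟨?_, (h 0).2⟩
          by_contra hcon
          push_neg at hcon
          obtain ⟨n, hn⟩ := exists_nat_one_div_lt (by linarith : (0:ℝ) < a - x)
          exact absurd (h n).1 (by push_neg; linarith)
        · rintro ⟨h1, h2⟩ n
          have : (0:ℝ) < 1 / ((n : ℝ) + 1) := by positivity
          exact ⟨by linarith, h2⟩
      have := tendsto_measure_iInter_atTop (μ := ν)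
        (fun n => (measurableSet_Ioc).nullMeasurableSet) hanti ⟨0, measure_ne_top _ _⟩
      rwa [hinter] at this
    refine ge_of_tendsto hseq ?_
    obtain ⟨N, hN⟩ := exists_nat_one_div_lt (by linarith : (0:ℝ) < a - t)
    filter_upwards [eventually_ge_atTop N] with n hn
    have hsmall : 1 / ((n : ℝ) + 1) ≤ 1 / ((N : ℝ) + 1) := by
      apply one_div_le_one_div_of_le (by positivity); exact_mod_cast Nat.succ_le_succ hn
    have h1 : t < a - 1 / ((n : ℝ) + 1) := by linarith
    have h2 : a - 1 / ((n : ℝ) + 1) < a := by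
      have : (0:ℝ) < 1 / ((n : ℝ) + 1) := by positivity
      linarith
    have := h_before _ h1 h2
    rw [hw _] at this
    exact ENNReal.ofReal_le_of_le_toReal (by linarith)


/-- Extended Bihari inequality (general form), Lemma 2.3 of the paper. -/
theorem bihari_general
    (T : ℝ) (hT : 0 < T)
    (g h lam : ℝ → ℝ)
    (hg_nonneg : ∀ t ∈ Icc (0:ℝ) T, 0 ≤ g t)
    (hh_pos : ∀ t ∈ Icc (0:ℝ) T, 0 < h t)
    (hlam_nonneg : ∀ t ∈ Icc (0:ℝ) T, 0 ≤ lam t)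
    (hg_bdd : ∃ M : ℝ, ∀ t ∈ Icc (0:ℝ) T, g t ≤ M)
    (hh_bdd : ∃ M : ℝ, ∀ t ∈ Icc (0:ℝ) T, h t ≤ M)
    (hlam_bdd : ∃ M : ℝ, ∀ t ∈ Icc (0:ℝ) T, lam t ≤ M)
    (hg_meas : Measurable g) (hh_meas : Measurable h) (hlam_meas : Measurable lam)
    (V : StieltjesFunction ℝ) (hV_cont : Continuous ⇑V)
    (Φ : ℝ → ℝ) (hΦ_cont : Continuous Φ)
    (hΦ_mono : MonotoneOn Φ (Ici 0))
    (hΦ_pos : ∀ r : ℝ, 0 < r → 0 < Φ r)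
    (z₀ : ℝ) (hz₀ : 0 < z₀)
    (J : ℝ → ℝ) (hJ : ∀ z : ℝ, J z = ∫ r in z₀..z, (Φ r)⁻¹)
    (hmain : ∀ t ∈ Icc (0:ℝ) T,
      g t ≤ h t + ∫ s in Ioc t T, lam s * Φ (g s) ∂V.measure) :
    ∀ t ∈ Icc (0:ℝ) T, 0 < g t →
      J (g t) ≤ J (sSup (h '' Icc t T)) + ∫ s in Ioc t T, lam s ∂V.measure := by
  obtain ⟨Mg, hMg⟩ := hg_bdd
  obtain ⟨Mh, hMh⟩ := hh_bdd
  obtain ⟨Ml, hMl⟩ := hlam_bdd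
  set μ := V.measure with hμdef
  have hΦ0 : 0 ≤ Φ 0 := by
    have h1 : Tendsto Φ (𝓝[>] (0:ℝ)) (𝓝 (Φ 0)) :=
      (hΦ_cont.tendsto 0).mono_left nhdsWithin_le_nhds
    refine ge_of_tendsto h1 ?_
    filter_upwards [self_mem_nhdsWithin] with r hr
    exact (hΦ_pos r hr).le
  have hΦnn : ∀ r : ℝ, 0 ≤ r → 0 ≤ Φ r := fun r hr =>
    le_trans hΦ0 (hΦ_mono (mem_Ici.2 le_rfl) (mem_Ici.2 hr) hr)
  set Mg' := max Mg 0 with hMg'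
  set Ml' := max Ml 0 with hMl'
  set C := Ml' * Φ Mg' with hCdef
  have hρ_bound : ∀ u ∈ Icc (0:ℝ) T, 0 ≤ lam u * Φ (g u) ∧ lam u * Φ (g u) ≤ C := by
    intro u hu
    have h1 : 0 ≤ lam u := hlam_nonneg u hu
    have h2 : 0 ≤ g u := hg_nonneg u hu
    have h3 : 0 ≤ Φ (g u) := hΦnn _ h2
    have h4 : Φ (g u) ≤ Φ Mg' := hΦ_mono (mem_Ici.2 h2) (mem_Ici.2 (le_max_right _ _))
      (le_trans (hMg u hu) (le_max_left _ _))
    have h5 : lam u ≤ Ml' := le_trans (hMl u hu) (le_max_left _ _)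
    exact ⟨mul_nonneg h1 h3, mul_le_mul h5 h4 h3 (le_trans h1 h5)⟩
  have hμfin : ∀ a b : ℝ, μ (Ioc a b) < ⊤ := fun a b => by
    rw [hμdef, V.measure_Ioc]; exact ENNReal.ofReal_lt_top
  have hρ_meas : Measurable (fun u => lam u * Φ (g u)) :=
    hlam_meas.mul (hΦ_cont.measurable.comp hg_meas)
  have hρ_int : ∀ s : ℝ, 0 ≤ s → IntegrableOn (fun u => lam u * Φ (g u)) (Ioc s T) μ := by
    intro s hs
    refine Integrable.mono'
      ((integrableOn_const (hμfin s T).ne) : IntegrableOn (fun _ => C) (Ioc s T) μ)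
      hρ_meas.aestronglyMeasurable ?_
    refine (ae_restrict_iff' measurableSet_Ioc).2 (Eventually.of_forall fun u hu => ?_)
    have hu' : u ∈ Icc (0:ℝ) T := ⟨le_trans hs hu.1.le, hu.2⟩
    rw [Real.norm_eq_abs, abs_of_nonneg (hρ_bound u hu').1]
    exact (hρ_bound u hu').2
  have hlam_int : ∀ s : ℝ, 0 ≤ s → IntegrableOn lam (Ioc s T) μ := by
    intro s hs
    refine Integrable.mono'
      ((integrableOn_const (hμfin s T).ne) : IntegrableOn (fun _ => Ml') (Ioc s T) μ)
      hlam_meas.aestronglyMeasurable ?_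
    refine (ae_restrict_iff' measurableSet_Ioc).2 (Eventually.of_forall fun u hu => ?_)
    have hu' : u ∈ Icc (0:ℝ) T := ⟨le_trans hs hu.1.le, hu.2⟩
    rw [Real.norm_eq_abs, abs_of_nonneg (hlam_nonneg u hu')]
    exact le_trans (hMl u hu') (le_max_left _ _)
  -- interval integrability of (Φ r)⁻¹ between positive endpoints
  have hΦinv_ii : ∀ x y : ℝ, 0 < x → 0 < y →
      IntervalIntegrable (fun r => (Φ r)⁻¹) volume x y := by
    intro x y hx hy
    apply ContinuousOn.intervalIntegrable
    apply ContinuousOn.inv₀ hΦ_cont.continuousOn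
    intro r hr
    rw [Set.uIcc_eq_union] at hr
    have hr0 : 0 < r := by
      rcases hr with hr | hr
      · exact lt_of_lt_of_le (lt_min hx hy) (by rcases hr with ⟨h1, _⟩; exact le_trans (min_le_left _ _) h1 ) |>.trans_le le_rfl
      · exact lt_of_lt_of_le (lt_min hx hy) (by rcases hr with ⟨h1, _⟩; exact le_trans (min_le_right _ _) h1)
    exact ne_of_gt (hΦ_pos r hr0)
  have hJdiff : ∀ a b : ℝ, 0 < a → a ≤ b → J b - J a = ∫ r in a..b, (Φ r)⁻¹ := by
    intro a b ha hab
    rw [hJ a, hJ b]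
    exact intervalIntegral.integral_interval_sub_left
      (hΦinv_ii z₀ b hz₀ (lt_of_lt_of_le ha hab)) (hΦinv_ii z₀ a hz₀ ha)
  have hG_anti : ∀ a b : ℝ, 0 < a → a ≤ b → (Φ b)⁻¹ ≤ (Φ a)⁻¹ := by
    intro a b ha hab
    have h1 : 0 < Φ a := hΦ_pos a ha
    have h2 : Φ a ≤ Φ b := hΦ_mono (mem_Ici.2 ha.le) (mem_Ici.2 (le_trans ha.le hab)) hab
    have := one_div_le_one_div_of_le h1 h2
    simpa [one_div] using this
  have hGmeas : Measurable fun r : ℝ => (Φ r)⁻¹ := hΦ_cont.measurable.inv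
  -- now fix t
  intro t ht hgt
  have ht0 : 0 ≤ t := ht.1
  have htT : t ≤ T := ht.2
  set H := sSup (h '' Icc t T) with hHdef
  have himg_bdd : BddAbove (h '' Icc t T) := by
    refine ⟨Mh, ?_⟩
    rintro _ ⟨s, hs, rfl⟩
    exact hMh s ⟨le_trans ht0 hs.1, hs.2⟩
  have hhH : ∀ s ∈ Icc t T, h s ≤ H := fun s hs => le_csSup himg_bdd ⟨s, hs, rfl⟩
  have hHpos : 0 < H := lt_of_lt_of_le (hh_pos t ht) (hhH t ⟨le_refl t, htT⟩)
  set d : ℝ → ℝ≥0∞ := fun u => ENNReal.ofReal (lam u * Φ (g u)) with hddef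
  have hd_meas : Measurable d := hρ_meas.ennreal_ofReal
  set ν : Measure ℝ := (μ.restrict (Ioc t T)).withDensity d with hνdef
  have hν_Ioc : ∀ s ∈ Icc t T,
      ν (Ioc s T) = ENNReal.ofReal (∫ u in Ioc s T, lam u * Φ (g u) ∂μ) := by
    intro s hs
    rw [hνdef, withDensity_apply _ measurableSet_Ioc,
      Measure.restrict_restrict measurableSet_Ioc,
      inter_eq_left.mpr (Ioc_subset_Ioc_left hs.1)]
    rw [← ofReal_integral_eq_lintegral_ofReal (hρ_int s (le_trans ht0 hs.1)) ?_]
    refine (ae_restrict_iff' measurableSet_Ioc).2 (Eventually.of_forall fun u hu => ?_)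
    exact (hρ_bound u ⟨le_trans (le_trans ht0 hs.1) hu.1.le, hu.2⟩).1
  haveI hν_fin : IsFiniteMeasure ν := by
    constructor
    rw [hνdef, withDensity_apply _ MeasurableSet.univ, Measure.restrict_univ]
    have hb : ∀ᵐ u ∂(μ.restrict (Ioc t T)), d u ≤ ENNReal.ofReal C := by
      refine (ae_restrict_iff' measurableSet_Ioc).2 (Eventually.of_forall fun u hu => ?_)
      exact ENNReal.ofReal_le_ofReal (hρ_bound u ⟨le_trans ht0 hu.1.le, hu.2⟩).2
    refine lt_of_le_of_lt (lintegral_mono_ae hb) ?_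
    rw [lintegral_const, Measure.restrict_apply MeasurableSet.univ, univ_inter]
    exact ENNReal.mul_lt_top ENNReal.ofReal_lt_top (hμfin t T)
  set w : ℝ → ℝ := fun s => H + (ν (Ioc s T)).toReal with hwdef
  have hw_eq : ∀ s, w s = H + (ν (Ioc s T)).toReal := fun s => rfl
  have hwH : ∀ s, H ≤ w s := fun s => le_add_of_nonneg_right ENNReal.toReal_nonneg
  have hw0 : ∀ s, 0 < w s := fun s => lt_of_lt_of_le hHpos (hwH s)
  have hw_anti : Antitone w := by
    intro a b hab
    have h2 : ν (Ioc b T) ≤ ν (Ioc a T) := measure_mono (Ioc_subset_Ioc_left hab)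
    have h3 := (ENNReal.toReal_le_toReal (measure_ne_top _ _) (measure_ne_top ν (Ioc a T))).2 h2
    simp only [hwdef]
    linarith
  have hw_meas : Measurable w := by
    have h1 : Measurable fun s => ν (Ioc s T) :=
      Antitone.measurable (fun a b hab => measure_mono (Ioc_subset_Ioc_left hab))
    exact measurable_const.add h1.ennreal_toReal
  have hgw : ∀ s ∈ Icc t T, g s ≤ w s := by
    intro s hs
    have hs0 : s ∈ Icc 0 T := ⟨le_trans ht0 hs.1, hs.2⟩
    have h1 := hmain s hs0
    have h2 : ∫ u in Ioc s T, lam u * Φ (g u) ∂μ = (ν (Ioc s T)).toReal := by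
      rw [hν_Ioc s hs, ENNReal.toReal_ofReal]
      exact setIntegral_nonneg measurableSet_Ioc fun u hu =>
        (hρ_bound u ⟨le_trans (le_trans ht0 hs.1) hu.1.le, hu.2⟩).1
    rw [h2] at h1
    have h3 := hhH s hs
    rw [hw_eq s]
    linarith
  -- reduce to core inequality
  have hgwt : g t ≤ w t := hgw t ⟨le_refl t, htT⟩
  have hJ1 : J (g t) ≤ J (w t) := by
    have hdd := hJdiff (g t) (w t) hgt hgwt
    have hnn : 0 ≤ ∫ r in (g t)..(w t), (Φ r)⁻¹ :=
      intervalIntegral.integral_nonneg hgwt fun r hr =>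
        inv_nonneg.2 (hΦnn r (le_trans hgt.le hr.1))
    linarith
  have hJ2 : J (w t) - J H = ∫ r in H..(w t), (Φ r)⁻¹ := hJdiff H (w t) hHpos (hwH t)
  have hR_nn : 0 ≤ ∫ s in Ioc t T, lam s ∂μ :=
    setIntegral_nonneg measurableSet_Ioc fun s hs => hlam_nonneg s ⟨le_trans ht0 hs.1.le, hs.2⟩
  suffices hcore : ∫ r in H..(w t), (Φ r)⁻¹ ≤ ∫ s in Ioc t T, lam s ∂μ by linarith
  rw [intervalIntegral.integral_of_le (hwH t)]
  have hGint : IntegrableOn (fun r => (Φ r)⁻¹) (Ioc H (w t)) volume :=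
    (hΦinv_ii H (w t) hHpos (hw0 t)).1
  have hGnn_ae : 0 ≤ᵐ[volume.restrict (Ioc H (w t))] fun r => (Φ r)⁻¹ := by
    refine (ae_restrict_iff' measurableSet_Ioc).2 (Eventually.of_forall fun r hr => ?_)
    exact inv_nonneg.2 (hΦnn r (le_trans hHpos.le hr.1.le))
  have hlamnn_ae : 0 ≤ᵐ[μ.restrict (Ioc t T)] lam := by
    refine (ae_restrict_iff' measurableSet_Ioc).2 (Eventually.of_forall fun s hs => ?_)
    exact hlam_nonneg s ⟨le_trans ht0 hs.1.le, hs.2⟩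
  rw [← ENNReal.ofReal_le_ofReal_iff hR_nn,
    ofReal_integral_eq_lintegral_ofReal hGint hGnn_ae,
    ofReal_integral_eq_lintegral_ofReal (hlam_int t ht0) hlamnn_ae]
  -- the lintegral chain
  calc ∫⁻ r in Ioc H (w t), ENNReal.ofReal ((Φ r)⁻¹) ∂volume
      = ∫⁻ y in Ioi 0, (volume.restrict (Ioc H (w t))) {r | y < (Φ r)⁻¹} :=
        lintegral_eq_lintegral_meas_lt _ hGnn_ae hGmeas.aemeasurable
    _ ≤ ∫⁻ y in Ioi 0, ν {s | y ≤ (Φ (w s))⁻¹} := by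
        refine lintegral_mono fun y => ?_
        rw [Measure.restrict_apply (measurableSet_lt measurable_const hGmeas)]
        set S := {r | y < (Φ r)⁻¹} ∩ Ioc H (w t) with hSdef
        rcases eq_empty_or_nonempty S with hS | hSne
        · rw [hS]; simp
        · have hSbdd : BddAbove S := ⟨w t, fun r hr => hr.2.2⟩
          set c := sSup S with hcdef
          obtain ⟨r₀, hr₀⟩ := id hSne
          have hcH : H < c := lt_of_lt_of_le hr₀.2.1 (le_csSup hSbdd hr₀)
          have hcw : c ≤ w t := csSup_le hSne fun r hr => hr.2.2
          have hvol : volume S ≤ ENNReal.ofReal (c - H) := by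
            refine le_trans (measure_mono (fun r hr => ?_)) (le_of_eq (Real.volume_Ioc))
            exact ⟨hr.2.1, le_csSup hSbdd hr⟩
          refine le_trans hvol ?_
          refine bihari_key ν t T H c y hHpos (fun r => (Φ r)⁻¹)
            (fun a b ha hab => hG_anti a b (lt_of_lt_of_le hHpos ha) hab)
            ?_ w hw_eq hcH hcw ?_
          · exact (hΦ_cont.continuousAt.inv₀
              (ne_of_gt (hΦ_pos c (lt_trans hHpos hcH)))).continuousWithinAt
          · intro r hrH hrc
            obtain ⟨r', hr'S, hrr'⟩ := exists_lt_of_lt_csSup hSne hrc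
            exact lt_of_lt_of_le hr'S.1 (hG_anti r r' (lt_trans hHpos hrH) hrr'.le)
    _ = ∫⁻ s, ENNReal.ofReal ((Φ (w s))⁻¹) ∂ν := by
        refine (lintegral_eq_lintegral_meas_le ν (Eventually.of_forall fun s => ?_)
          ((hGmeas.comp hw_meas).aemeasurable)).symm
        exact inv_nonneg.2 (hΦnn _ (hw0 s).le)
    _ = ∫⁻ s in Ioc t T, (d s) * ENNReal.ofReal ((Φ (w s))⁻¹) ∂μ := by
        rw [hνdef]
        exact lintegral_withDensity_eq_lintegral_mul _ hd_meas (hGmeas.comp hw_meas).ennreal_ofReal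
    _ ≤ ∫⁻ s in Ioc t T, ENNReal.ofReal (lam s) ∂μ := by
        refine lintegral_mono_ae ((ae_restrict_iff' measurableSet_Ioc).2
          (Eventually.of_forall fun s hs => ?_))
        have hs' : s ∈ Icc t T := ⟨hs.1.le, hs.2⟩
        have hs0 : s ∈ Icc 0 T := ⟨le_trans ht0 hs.1.le, hs.2⟩
        have h1 : Φ (g s) ≤ Φ (w s) :=
          hΦ_mono (mem_Ici.2 (hg_nonneg s hs0)) (mem_Ici.2 (hw0 s).le) (hgw s hs')
        have h2 : 0 < Φ (w s) := hΦ_pos _ (hw0 s)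
        have h3 : 0 ≤ lam s := hlam_nonneg s hs0
        rw [hddef]
        rw [← ENNReal.ofReal_mul (hρ_bound s hs0).1]
        apply ENNReal.ofReal_le_ofReal
        calc lam s * Φ (g s) * (Φ (w s))⁻¹
            ≤ lam s * Φ (w s) * (Φ (w s))⁻¹ := by
              apply mul_le_mul_of_nonneg_right _ (inv_nonneg.2 h2.le)
              exact mul_le_mul_of_nonneg_left h1 h3
          _ = lam s := by field_simp
end

section
/- Let H be a real Hilbert space and let φ : H → ℝ be convex and lower semicontinuous with φ(0) = 0 and φ(x) ≥ 0 for all x ∈ H. Suppose there exist γ₀ > 0 and M₀ ≥ 0 such that φ(γ₀·h) ≤ M₀ for every h ∈ H with ‖h‖ ≤ 1. Let ε > 0, u ∈ H, and let j minimize v ↦ ½‖v − u‖² + ε·φ(v) over H. Then γ₀·‖u − j‖ ≤ ε·M₀ + ⟨u − j, u⟩. -/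
open Set

/-- The inequality `γ₀‖Dφ_ε(u)‖ ≤ εM₀ + ⟨Dφ_ε(u), u⟩` expressing local
boundedness of `φ` near `0` (Eqn. (delta1.r) in the proof of Theorem 2.5). -/
theorem prox_local_bound_near_zero
    {H : Type*} [NormedAddCommGroup H] [InnerProductSpace ℝ H] [CompleteSpace H]
    (φ : H → ℝ) (hφ_convex : ConvexOn ℝ (univ : Set H) φ)
    (hφ_lsc : LowerSemicontinuous φ)
    (hφ0 : φ 0 = 0) (hφ_nonneg : ∀ x : H, 0 ≤ φ x)
    (γ₀ M₀ : ℝ) (hγ₀ : 0 < γ₀) (hM₀ : 0 ≤ M₀)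
    (hloc : ∀ h : H, ‖h‖ ≤ 1 → φ (γ₀ • h) ≤ M₀)
    (ε : ℝ) (hε : 0 < ε) (u : H) (j : H)
    (hj : ∀ v : H, 1/2 * ‖j - u‖^2 + ε * φ j ≤ 1/2 * ‖v - u‖^2 + ε * φ v) :
    γ₀ * ‖u - j‖ ≤ ε * M₀ + (inner ℝ (u - j) u : ℝ) := by
  -- Subgradient inequality
  have subgrad : ∀ v : H, (inner ℝ (u - j) (v - j) : ℝ) ≤ ε * (φ v - φ j) := by
    intro v
    have key : ∀ t : ℝ, 0 < t → t ≤ 1 →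
        (inner ℝ (u - j) (v - j) : ℝ) ≤ ε * (φ v - φ j) + t * (‖v - j‖^2 / 2) := by
      intro t ht ht1
      have hmem : (j + t • (v - j)) = (1 - t) • j + t • v := by
        module
      have hconv : φ (j + t • (v - j)) ≤ (1 - t) * φ j + t * φ v := by
        rw [hmem]
        exact hφ_convex.2 (mem_univ j) (mem_univ v) (by linarith) ht.le (by ring)
      have hmin := hj (j + t • (v - j))
      have hnorm : ‖j + t • (v - j) - u‖^2
          = ‖j - u‖^2 + 2 * t * (inner ℝ (j - u) (v - j) : ℝ) + t^2 * ‖v - j‖^2 := by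
        have : j + t • (v - j) - u = (j - u) + t • (v - j) := by abel
        rw [this, @norm_add_sq_real, real_inner_smul_right, norm_smul]
        simp [Real.norm_eq_abs, abs_of_pos ht]
        ring
      have hinner : (inner ℝ (j - u) (v - j) : ℝ) = -(inner ℝ (u - j) (v - j) : ℝ) := by
        rw [← inner_neg_left]; simp
      rw [hnorm, hinner] at hmin
      have h0 : 0 ≤ t * (-(inner ℝ (u - j) (v - j) : ℝ)) + t^2 / 2 * ‖v - j‖^2
          + ε * (t * (φ v - φ j)) := by nlinarith [hmin, hconv]
      have := mul_le_mul_of_nonneg_left h0 (le_of_lt (inv_pos.mpr ht))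
      nlinarith [this, sq_nonneg t]
    refine le_of_forall_pos_le_add fun δ hδ => ?_
    set c := ‖v - j‖^2 / 2 with hc
    have hcnn : 0 ≤ c := by positivity
    have htpos : 0 < min 1 (δ / (c + 1)) := by positivity
    have h1 : min 1 (δ / (c + 1)) ≤ 1 := min_le_left _ _
    have := key _ htpos h1
    have hle : min 1 (δ / (c + 1)) * c ≤ δ := by
      have h2 : min 1 (δ / (c + 1)) ≤ δ / (c + 1) := min_le_right _ _
      have : min 1 (δ / (c + 1)) * c ≤ (δ / (c + 1)) * c :=
        mul_le_mul_of_nonneg_right h2 hcnn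
      calc min 1 (δ / (c + 1)) * c ≤ (δ / (c + 1)) * c := this
        _ ≤ δ := by
          rw [div_mul_eq_mul_div, div_le_iff₀ (by positivity)]
          nlinarith
    linarith
  by_cases huj : u - j = 0
  · simp [huj]
    positivity
  · have hn : (0 : ℝ) < ‖u - j‖ := norm_pos_iff.mpr huj
    set h : H := ‖u - j‖⁻¹ • (u - j) with hh
    have hh1 : ‖h‖ ≤ 1 := by
      rw [hh, norm_smul, norm_inv, norm_norm, inv_mul_cancel₀ hn.ne']
    have hsub := subgrad (γ₀ • h)
    have hφb : φ (γ₀ • h) ≤ M₀ := hloc h hh1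
    have hinner1 : (inner ℝ (u - j) (γ₀ • h) : ℝ) = γ₀ * ‖u - j‖ := by
      rw [hh, real_inner_smul_right, real_inner_smul_right,
        real_inner_self_eq_norm_sq]
      field_simp
    have hexp : (inner ℝ (u - j) (γ₀ • h - j) : ℝ)
        = γ₀ * ‖u - j‖ - (inner ℝ (u - j) j : ℝ) := by
      rw [inner_sub_right, hinner1]
    have huu : (inner ℝ (u - j) u : ℝ) - (inner ℝ (u - j) j : ℝ) = ‖u - j‖^2 := by
      rw [← inner_sub_right, real_inner_self_eq_norm_sq]
    have hφj : 0 ≤ φ j := hφ_nonneg j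
    nlinarith [hsub, hexp, huu, sq_nonneg ‖u - j‖, mul_le_mul_of_nonneg_left hφb hε.le,
      mul_nonneg hε.le hφj]
end
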